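/- arXiv:2308.09344 — 3 statements merged into one kernel-verified Lean document; each statement's English description precedes it below -/
import Mathlib

section
/- If x is sorted by the (132,321)-machine, then x avoids the bivincular pattern 132*, i.e., x contains no indices i < j with x_i < x_{j+1} and x_j = x_{j+1} + 1. -/
/-- `isoOrd p q` : `q` is order-isomorphic to `p`. -/
def isoOrd (p q : List ℕ) : Bool :=
  (p.length == q.length) &&
    (List.range p.length).all fun i =>
      (List.range p.length).all fun j =>
        decide ((p.getD i 0 < p.getD j 0) ↔ (q.getD i 0 < q.getD j 0))

/-- `containsPat p w` : the word `w` contains an occurrence of the classical pattern `p`. -/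
def containsPat (p w : List ℕ) : Bool :=
  (w.sublistsLen p.length).any (isoOrd p)

/-- Pop phase of the right-greedy `T`-avoiding stack: with next input `a`,
pop entries from the top of the stack while pushing `a` would create a pattern of `T`
(read from top to bottom).  Returns the remaining stack and the popped entries in output order. -/
def popPhase (T : List (List ℕ)) (a : ℕ) : List ℕ → List ℕ × List ℕ
  | [] => ([], [])
  | b :: s =>
    if T.any (fun p => containsPat p (a :: b :: s)) then
      let r := popPhase T a s
      (r.1, b :: r.2)
    else (b :: s, [])

/-- Main loop of the right-greedy `T`-avoiding stack map. -/
def stkAux (T : List (List ℕ)) : List ℕ → List ℕ → List ℕ → List ℕ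
  | [], stack, out => out ++ stack
  | a :: rest, stack, out =>
    let r := popPhase T a stack
    stkAux T rest (a :: r.1) (out ++ r.2)

/-- The generalized stack-sorting map `s_T` : the input is pushed right-greedily through a
stack which must avoid (read from top to bottom) every pattern in `T`. -/
def sT (T : List (List ℕ)) (x : List ℕ) : List ℕ := stkAux T x [] []

/-- West's stack-sorting map: the stack must be increasing from top to bottom,
i.e. must avoid `21` read from top to bottom. -/
def westSort (x : List ℕ) : List ℕ := sT [[2,1]] x

/-- `x` is a permutation of `{1,…,n}`, written as a list. -/
def IsPermList (n : ℕ) (x : List ℕ) : Prop := x.Perm (List.range' 1 n)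

/-- The identity permutation `1 2 … n`. -/
def idPerm (n : ℕ) : List ℕ := List.range' 1 n

/-- `x` contains the bivincular pattern `132*` : positions `i < j` (0-based) with
`x i < x (j+1)` and `x j = x (j+1) + 1`. -/
def Has132Star (x : List ℕ) : Prop :=
  ∃ i j, i < j ∧ j + 1 < x.length ∧ x.getD i 0 < x.getD (j+1) 0 ∧
    x.getD j 0 = x.getD (j+1) 0 + 1

/-- `x` contains the bivincular pattern `123*` : positions `i < j` (0-based) with
`x i < x j` and `x (j+1) = x j + 1`. -/
def Has123Star (x : List ℕ) : Prop :=
  ∃ i j, i < j ∧ j + 1 < x.length ∧ x.getD i 0 < x.getD j 0 ∧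
    x.getD (j+1) 0 = x.getD j 0 + 1

/-- Boolean version of `Has132Star`. -/
def has132star (x : List ℕ) : Bool :=
  (List.range x.length).any fun j =>
    decide (j + 1 < x.length) && (x.getD j 0 == x.getD (j+1) 0 + 1) &&
      (List.range j).any fun i => decide (x.getD i 0 < x.getD (j+1) 0)

/-- Boolean version of `Has123Star`. -/
def has123star (x : List ℕ) : Bool :=
  (List.range x.length).any fun j =>
    decide (j + 1 < x.length) && (x.getD (j+1) 0 == x.getD j 0 + 1) &&
      (List.range j).any fun i => decide (x.getD i 0 < x.getD j 0)

open scoped List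

lemma isoOrd132_iff (a b c : ℕ) : isoOrd [1,3,2] [a,b,c] = true ↔ (a < c ∧ c < b) := by
  simp [isoOrd, show List.range 3 = [0,1,2] from rfl]
  omega

lemma isoOrd321_iff (a b c : ℕ) : isoOrd [3,2,1] [a,b,c] = true ↔ (c < b ∧ b < a) := by
  simp [isoOrd, show List.range 3 = [0,1,2] from rfl]
  omega

lemma isoOrd21_iff (a b : ℕ) : isoOrd [2,1] [a,b] = true ↔ b < a := by
  simp [isoOrd, show List.range 2 = [0,1] from rfl]
  omega

def Pat3 (a b c : ℕ) : Prop := (a < c ∧ c < b) ∨ (c < b ∧ b < a)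

abbrev TT : List (List ℕ) := [[1,3,2],[3,2,1]]

abbrev WW : List (List ℕ) := [[2,1]]

lemma cond3_iff (w : List ℕ) :
    ((TT.any fun p => containsPat p w) = true) ↔ ∃ a b c, [a,b,c].Sublist w ∧ Pat3 a b c := by
  simp only [TT, List.any_cons, List.any_nil, Bool.or_false, Bool.or_eq_true, containsPat,
    List.any_eq_true, List.mem_sublistsLen]
  constructor
  · rintro (⟨l, ⟨hs, hl⟩, hiso⟩ | ⟨l, ⟨hs, hl⟩, hiso⟩) <;>
    · match l, hl with
      | [a,b,c], _ =>
        refine ⟨a, b, c, hs, ?_⟩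
        first
        | exact Or.inl ((isoOrd132_iff a b c).mp hiso)
        | exact Or.inr ((isoOrd321_iff a b c).mp hiso)
  · rintro ⟨a, b, c, hs, (h | h)⟩
    · exact Or.inl ⟨[a,b,c], ⟨hs, rfl⟩, (isoOrd132_iff a b c).mpr h⟩
    · exact Or.inr ⟨[a,b,c], ⟨hs, rfl⟩, (isoOrd321_iff a b c).mpr h⟩

lemma cond2_iff (w : List ℕ) :
    ((WW.any fun p => containsPat p w) = true) ↔ ∃ a b, [a,b].Sublist w ∧ b < a := by
  simp only [WW, List.any_cons, List.any_nil, Bool.or_false, containsPat,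
    List.any_eq_true, List.mem_sublistsLen]
  constructor
  · rintro ⟨l, ⟨hs, hl⟩, hiso⟩
    match l, hl with
    | [a,b], _ => exact ⟨a, b, hs, (isoOrd21_iff a b).mp hiso⟩
  · rintro ⟨a, b, hs, h⟩
    exact ⟨[a,b], ⟨hs, rfl⟩, (isoOrd21_iff a b).mpr h⟩

def NoPat (l : List ℕ) : Prop := ∀ a b c, [a,b,c].Sublist l → ¬ Pat3 a b c

def NoPat2 (l : List ℕ) : Prop := ∀ a b, [a,b].Sublist l → ¬ b < a

lemma cond3_false_iff (w : List ℕ) :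
    ((TT.any fun p => containsPat p w) = false) ↔ NoPat w := by
  rw [← Bool.not_eq_true, cond3_iff]
  simp only [not_exists]
  constructor
  · intro h a b c hs hp; exact h a b c ⟨hs, hp⟩
  · rintro h a b c ⟨hs, hp⟩; exact h a b c hs hp

lemma cond2_false_iff (w : List ℕ) :
    ((WW.any fun p => containsPat p w) = false) ↔ NoPat2 w := by
  rw [← Bool.not_eq_true, cond2_iff]
  simp only [not_exists]
  constructor
  · intro h a b hs hp; exact h a b ⟨hs, hp⟩
  · rintro h a b ⟨hs, hp⟩; exact h a b hs hp

lemma NoPat.sublist {l l' : List ℕ} (h : NoPat l) (hs : l'.Sublist l) : NoPat l' :=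
  fun a b c hsub => h a b c (hsub.trans hs)

lemma pp_append (T : List (List ℕ)) (a : ℕ) : ∀ s : List ℕ,
    (popPhase T a s).2 ++ (popPhase T a s).1 = s := by
  intro s
  induction s with
  | nil => simp [popPhase]
  | cons b s ih =>
    by_cases h : (T.any fun p => containsPat p (a :: b :: s)) = true
    · simp only [popPhase, if_pos h]
      simpa using ih
    · simp only [popPhase]
      rw [if_neg h]
      simp

lemma pp_sf_sublist (T : List (List ℕ)) (a : ℕ) (s : List ℕ) :
    (popPhase T a s).1.Sublist s := by
  conv_rhs => rw [← pp_append T a s]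
  exact List.sublist_append_right _ _

lemma pp_end3 (a : ℕ) : ∀ s : List ℕ, NoPat (a :: (popPhase TT a s).1) := by
  intro s
  induction s with
  | nil =>
    simp only [popPhase]
    intro u v w hs
    have := hs.length_le
    simp at this
  | cons b s ih =>
    by_cases h : (TT.any fun p => containsPat p (a :: b :: s)) = true
    · simpa only [popPhase, if_pos h] using ih
    · simp only [popPhase, if_neg h]
      exact (cond3_false_iff _).mp (Bool.not_eq_true _ ▸ h)

lemma pp_end2 (a : ℕ) : ∀ s : List ℕ, NoPat2 (a :: (popPhase WW a s).1) := by
  intro s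
  induction s with
  | nil =>
    simp only [popPhase]
    intro u v hs
    have := hs.length_le
    simp at this
  | cons b s ih =>
    by_cases h : (WW.any fun p => containsPat p (a :: b :: s)) = true
    · simpa only [popPhase, if_pos h] using ih
    · simp only [popPhase, if_neg h]
      exact (cond2_false_iff _).mp (Bool.not_eq_true _ ▸ h)

lemma stk_decomp (T : List (List ℕ)) : ∀ (rest stack out : List ℕ),
    ∃ w, stkAux T rest stack out = out ++ w ∧ stack.Sublist w := by
  intro rest
  induction rest with
  | nil => exact fun stack out => ⟨stack, rfl, List.Sublist.refl _⟩
  | cons a rest ih =>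
    intro stack out
    obtain ⟨w', hw', hsub⟩ := ih (a :: (popPhase T a stack).1) (out ++ (popPhase T a stack).2)
    refine ⟨(popPhase T a stack).2 ++ w', ?_, ?_⟩
    · show stkAux T rest _ _ = _
      rw [hw', List.append_assoc]
    · conv_lhs => rw [← pp_append T a stack]
      exact (List.Sublist.refl _).append ((List.sublist_cons_self a _).trans hsub)

lemma stk_perm (T : List (List ℕ)) : ∀ (rest stack out : List ℕ),
    (stkAux T rest stack out).Perm (out ++ stack ++ rest) := by
  intro rest
  induction rest with
  | nil => simp [stkAux]
  | cons a rest ih =>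
    intro stack out
    refine (ih _ _).trans ?_
    calc (out ++ (popPhase T a stack).2) ++ (a :: (popPhase T a stack).1) ++ rest
        = out ++ ((popPhase T a stack).2 ++ a :: (popPhase T a stack).1) ++ rest := by
          simp [List.append_assoc]
      _ ~ out ++ (a :: ((popPhase T a stack).2 ++ (popPhase T a stack).1)) ++ rest := by
          exact ((List.perm_middle).append_left out).append_right rest
      _ = out ++ (a :: stack) ++ rest := by rw [pp_append]
      _ = out ++ (a :: (stack ++ rest)) := by simp
      _ ~ out ++ (stack ++ a :: rest) := (List.perm_middle.symm).append_left out
      _ = out ++ stack ++ (a :: rest) := by simp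

lemma subperm_cons2 {l₁ l₂ : List ℕ} (a : ℕ) (h : l₁.Subperm l₂) : (a::l₁).Subperm (a::l₂) := by
  obtain ⟨l, hp, hs⟩ := h
  exact ⟨a::l, hp.cons a, hs.cons₂ a⟩

lemma subperm_append_left' {l₁ l₂ : List ℕ} (l : List ℕ) (h : l₁.Subperm l₂) :
    (l ++ l₁).Subperm (l ++ l₂) := by
  obtain ⟨m, hp, hs⟩ := h
  exact ⟨l ++ m, hp.append_left l, (List.Sublist.refl l).append hs⟩

lemma nodup_of_subperm {l₁ l₂ : List ℕ} (h : l₁.Subperm l₂) (hn : l₂.Nodup) : l₁.Nodup := by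
  obtain ⟨m, hp, hs⟩ := h
  exact hp.nodup (hs.nodup hn)

lemma stkAux_cons (T : List (List ℕ)) (a : ℕ) (rest stack out : List ℕ) :
    stkAux T (a :: rest) stack out
      = stkAux T rest (a :: (popPhase T a stack).1) (out ++ (popPhase T a stack).2) := rfl

lemma pp_noop (T : List (List ℕ)) (d : ℕ) (s : List ℕ)
    (h : (T.any fun p => containsPat p (d::s)) = false) : popPhase T d s = (s, []) := by
  cases s with
  | nil => rfl
  | cons b s =>
    simp only [popPhase]
    rw [if_neg]
    simp [h]

lemma occ_cons {d : ℕ} {s : List ℕ} (hnp : NoPat s) {a b c : ℕ}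
    (h : [a,b,c].Sublist (d::s)) (hp : Pat3 a b c) : a = d ∧ [b,c].Sublist s := by
  cases h with
  | cons _ h' => exact absurd hp (hnp a b c h')
  | cons_cons _ h' => exact ⟨rfl, h'⟩

lemma runLem (T : List (List ℕ)) : ∀ (pre stack out : List ℕ), ∃ st' out',
    (∀ rest, stkAux T (pre ++ rest) stack out = stkAux T rest st' out') ∧
    (out' ++ st').Perm (out ++ stack ++ pre) := by
  intro pre
  induction pre with
  | nil => exact fun stack out => ⟨stack, out, fun rest => rfl, by simp⟩
  | cons a pre ih =>
    intro stack out
    obtain ⟨st', out', hEq, hPerm⟩ := ih (a :: (popPhase T a stack).1) (out ++ (popPhase T a stack).2)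
    refine ⟨st', out', fun rest => hEq rest, hPerm.trans ?_⟩
    calc (out ++ (popPhase T a stack).2) ++ (a :: (popPhase T a stack).1) ++ pre
        = out ++ ((popPhase T a stack).2 ++ a :: (popPhase T a stack).1) ++ pre := by
          simp [List.append_assoc]
      _ ~ out ++ (a :: ((popPhase T a stack).2 ++ (popPhase T a stack).1)) ++ pre :=
          ((List.perm_middle).append_left out).append_right pre
      _ = out ++ (a :: stack) ++ pre := by rw [pp_append]
      _ = out ++ (a :: (stack ++ pre)) := by simp
      _ ~ out ++ (stack ++ a :: pre) := (List.perm_middle.symm).append_left out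
      _ = out ++ stack ++ (a :: pre) := by simp

lemma P1 : ∀ (s : List ℕ) (d u v : ℕ), NoPat s → [u,v].Sublist s → v < u → u < d →
    ∃ u' v', u' ∈ (popPhase TT d s).2 ∧ v' ∈ (popPhase TT d s).1 ∧ v' < u' ∧ u' < d := by
  intro s
  induction s with
  | nil =>
    intro d u v _ hsub
    have := hsub.length_le
    simp at this
  | cons t s' ih =>
    intro d u v hnp hsub hvu hud
    have hnp' : NoPat s' := hnp.sublist (List.sublist_cons_self t s')
    have hcond : (TT.any fun p => containsPat p (d :: t :: s')) = true :=
      (cond3_iff _).mpr ⟨d, u, v, List.Sublist.cons₂ d hsub, Or.inr ⟨hvu, hud⟩⟩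
    simp only [popPhase, if_pos hcond]
    cases hsub with
    | cons _ h' =>
      obtain ⟨u', v', m1, m2, m3, m4⟩ := ih d u v hnp' h' hvu hud
      exact ⟨u', v', List.mem_cons_of_mem t m1, m2, m3, m4⟩
    | cons_cons _ h' =>
      -- u = t, h' : [v] <+ s'
      by_cases hc : (TT.any fun p => containsPat p (d :: s')) = true
      · obtain ⟨a, b, c, hsub2, hp⟩ := (cond3_iff _).mp hc
        obtain ⟨rfl, hbc⟩ := occ_cons hnp' hsub2 hp
        rcases hp with ⟨h1, h2⟩ | ⟨h1, h2⟩
        · exact absurd (Or.inl ⟨by omega, h2⟩) (hnp t b c (List.Sublist.cons₂ t hbc))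
        · obtain ⟨u', v', m1, m2, m3, m4⟩ := ih a b c hnp' hbc h1 h2
          exact ⟨u', v', List.mem_cons_of_mem t m1, m2, m3, m4⟩
      · rw [pp_noop TT d s' (Bool.not_eq_true _ ▸ hc)]
        exact ⟨t, v, (List.mem_cons_self), List.singleton_sublist.mp h', hvu, hud⟩

lemma P2 : ∀ (s : List ℕ) (d b e : ℕ), NoPat s → e ∈ s → e < b → b < d →
    e ∈ (popPhase TT d s).1 ∨
      ∃ u' v', u' ∈ (popPhase TT d s).2 ∧ v' ∈ (popPhase TT d s).1 ∧ v' < u' ∧ u' < d := by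
  intro s
  induction s with
  | nil => intro d b e _ he; exact absurd he List.not_mem_nil
  | cons t s' ih =>
    intro d b e hnp he heb hbd
    have hnp' : NoPat s' := hnp.sublist (List.sublist_cons_self t s')
    by_cases hc : (TT.any fun p => containsPat p (d :: t :: s')) = true
    · simp only [popPhase, if_pos hc]
      by_cases he' : e ∈ s'
      · rcases ih d b e hnp' he' heb hbd with h | ⟨u', v', m1, m2, m3, m4⟩
        · exact Or.inl h
        · exact Or.inr ⟨u', v', List.mem_cons_of_mem t m1, m2, m3, m4⟩
      · have het : e = t := by
          rcases List.mem_cons.mp he with h | h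
          · exact h
          · exact absurd h he'
        subst het
        obtain ⟨a, b', c, hsub2, hp⟩ := (cond3_iff _).mp hc
        obtain ⟨rfl, hbc⟩ := occ_cons hnp hsub2 hp
        rcases hp with ⟨h1, h2⟩ | ⟨h1, h2⟩
        · -- 132 : a < c ∧ c < b'
          have hbc' : [b', c].Sublist s' := by
            cases hbc with
            | cons _ h'' => exact h''
            | cons_cons _ h'' => omega
          exact absurd (Or.inl ⟨by omega, h2⟩) (hnp e b' c (List.Sublist.cons₂ e hbc'))
        · -- 321 : c < b' ∧ b' < a
          cases hbc with
          | cons _ h'' =>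
            obtain ⟨u', v', m1, m2, m3, m4⟩ := P1 s' a b' c hnp' h'' h1 h2
            exact Or.inr ⟨u', v', List.mem_cons_of_mem e m1, m2, m3, m4⟩
          | cons_cons _ h'' =>
            -- b' = e, h'' : [c] <+ s'
            have hcs : c ∈ s' := List.singleton_sublist.mp h''
            rcases ih a b c hnp' hcs (by omega) (by omega) with h | ⟨u', v', m1, m2, m3, m4⟩
            · exact Or.inr ⟨e, c, (List.mem_cons_self), h, h1, by omega⟩
            · exact Or.inr ⟨u', v', List.mem_cons_of_mem e m1, m2, m3, m4⟩
    · rw [pp_noop TT d (t :: s') (Bool.not_eq_true _ ▸ hc)]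
      exact Or.inl he

lemma NPB (b : ℕ) (s : List ℕ) (hnp : NoPat ((b+1) :: s)) (hb : b ∉ s) (hc : (b+1) ∉ s) :
    (TT.any fun p => containsPat p (b :: (b+1) :: s)) = false := by
  rw [← Bool.not_eq_true, cond3_iff]
  rintro ⟨u, v, w, hsub, hp⟩
  cases hsub with
  | cons _ h' => exact hnp u v w h' hp
  | cons_cons _ h' =>
    -- u = b, h' : [v,w] <+ (b+1)::s
    cases h' with
    | cons_cons _ h'' =>
      -- v = b+1
      have hw : w ∈ s := List.singleton_sublist.mp h''
      rcases hp with ⟨h1, h2⟩ | ⟨h1, h2⟩ <;> omega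
    | cons _ h'' =>
      have hv : v ∈ s := h''.subset ((List.mem_cons_self))
      have hw : w ∈ s := h''.subset (List.mem_cons_of_mem v ((List.mem_cons_self)))
      rcases hp with ⟨h1, h2⟩ | ⟨h1, h2⟩
      · have hw1 : w ≠ b := fun h => hb (h ▸ hw)
        have hw2 : w ≠ b + 1 := fun h => hc (h ▸ hw)
        exact hnp (b+1) v w (List.Sublist.cons₂ _ h'') (Or.inl ⟨by omega, h2⟩)
      · exact hnp (b+1) v w (List.Sublist.cons₂ _ h'') (Or.inr ⟨h1, by omega⟩)

def Has231 (L : List ℕ) : Prop := ∃ a b c, [a,b,c].Sublist L ∧ c < a ∧ a < b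

lemma sublist_cons3 {a b c : ℕ} {s : List ℕ} (h : c ∈ s) :
    [a, b, c].Sublist (a :: b :: s) :=
  List.Sublist.cons₂ a (List.Sublist.cons₂ b (List.singleton_sublist.mpr h))

lemma has231_of_parts {u d v : ℕ} {o w : List ℕ} (hu : u ∈ o) (hs : [d, v].Sublist w)
    (h1 : v < u) (h2 : u < d) : Has231 (o ++ w) :=
  ⟨u, d, v, (List.singleton_sublist.mpr hu).append hs, h1, h2⟩

lemma MAIN (b : ℕ) (post : List ℕ) : ∀ (mid stack out : List ℕ),
    NoPat stack → (∃ e ∈ stack, e < b) →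
    (b :: (b+1) :: (mid ++ stack)).Nodup →
    Has231 (stkAux TT (mid ++ (b+1) :: b :: post) stack out) := by
  intro mid
  induction mid with
  | nil =>
    intro stack out hnp ⟨e, he, heb⟩ hnd
    simp only [List.nil_append] at hnd ⊢
    rw [stkAux_cons]
    set q := popPhase TT (b+1) stack with hq
    have hnpq : NoPat ((b+1) :: q.1) := pp_end3 (b+1) stack
    have hsubq : q.1.Sublist stack := pp_sf_sublist TT (b+1) stack
    rcases P2 stack (b+1) b e hnp he heb (Nat.lt_succ_self b) with hin | ⟨u', v', m1, m2, m3, m4⟩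
    · -- e survives; push b on top of (b+1)
      have hbs : b ∉ stack := by
        have := List.nodup_cons.mp hnd
        exact fun h => this.1 (List.mem_cons_of_mem _ h)
      have hcs : (b+1) ∉ stack := (List.nodup_cons.mp (List.nodup_cons.mp hnd).2).1
      have hno := NPB b q.1 hnpq (fun h => hbs (hsubq.subset h)) (fun h => hcs (hsubq.subset h))
      rw [stkAux_cons, pp_noop TT b ((b+1)::q.1) hno]
      obtain ⟨w, hw, hsubw⟩ := stk_decomp TT post (b :: (b+1) :: q.1) (out ++ q.2 ++ [])
      rw [hw]
      exact ⟨b, b+1, e, List.Sublist.trans ((sublist_cons3 hin).trans hsubw)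
        (List.sublist_append_right _ _), heb, Nat.lt_succ_self b⟩
    · obtain ⟨w, hw, hsubw⟩ := stk_decomp TT (b :: post) ((b+1) :: q.1) (out ++ q.2)
      rw [hw]
      exact has231_of_parts (List.mem_append_right out m1)
        ((List.Sublist.cons₂ _ (List.singleton_sublist.mpr m2)).trans hsubw) m3 m4
  | cons d mid' ih =>
    intro stack out hnp ⟨e, he, heb⟩ hnd
    rw [List.cons_append, stkAux_cons]
    set q := popPhase TT d stack with hq
    have hnpq : NoPat (d :: q.1) := pp_end3 d stack
    have hsubq : q.1.Sublist stack := pp_sf_sublist TT d stack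
    -- Nodup maintenance
    have hnd' : (b :: (b+1) :: (mid' ++ (d :: q.1))).Nodup := by
      have hperm : (b :: (b+1) :: (mid' ++ (d :: stack))).Perm
          (b :: (b+1) :: ((d :: mid') ++ stack)) := by
        refine (List.Perm.cons b (List.Perm.cons (b+1) ?_))
        exact List.perm_middle.trans (List.Perm.refl _)
      have h2 : (b :: (b+1) :: (mid' ++ (d :: stack))).Nodup :=
        (hperm.nodup_iff).mpr hnd
      have hsub : (b :: (b+1) :: (mid' ++ (d :: q.1))).Sublist
          (b :: (b+1) :: (mid' ++ (d :: stack))) := by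
        refine List.Sublist.cons₂ _ (List.Sublist.cons₂ _ ?_)
        exact (List.Sublist.refl mid').append (List.Sublist.cons₂ d hsubq)
      exact hsub.nodup h2
    have hdb : d ≠ b := by
      have := List.nodup_cons.mp hnd
      intro h; exact this.1 (by simp [h])
    rcases Nat.lt_or_ge d b with hlt | hge
    · exact ih (d :: q.1) (out ++ q.2) hnpq ⟨d, (List.mem_cons_self), hlt⟩ hnd'
    · have hbd : b < d := by omega
      rcases P2 stack d b e hnp he heb hbd with hin | ⟨u', v', m1, m2, m3, m4⟩
      · exact ih (d :: q.1) (out ++ q.2) hnpq ⟨e, List.mem_cons_of_mem d hin, heb⟩ hnd'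
      · obtain ⟨w, hw, hsubw⟩ := stk_decomp TT (mid' ++ (b+1) :: b :: post) (d :: q.1) (out ++ q.2)
        rw [hw]
        exact has231_of_parts (List.mem_append_right out m1)
          ((List.Sublist.cons₂ _ (List.singleton_sublist.mpr m2)).trans hsubw) m3 m4

lemma sub2_split {β γ : ℕ} : ∀ {L : List ℕ}, [β, γ].Sublist L →
    ∃ L1 L2, L = L1 ++ β :: L2 ∧ γ ∈ L2 := by
  intro L
  induction L with
  | nil => intro h; have := h.length_le; simp at this
  | cons o L' ih =>
    intro h
    cases h with
    | cons _ h' =>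
      obtain ⟨L1, L2, hEq, hγ⟩ := ih h'
      exact ⟨o :: L1, L2, by rw [hEq]; rfl, hγ⟩
    | cons_cons _ h' =>
      exact ⟨[], L', rfl, List.singleton_sublist.mp h'⟩

lemma sub3_split {α β γ : ℕ} : ∀ {L : List ℕ}, [α, β, γ].Sublist L →
    ∃ L1 L2, L = L1 ++ β :: L2 ∧ α ∈ L1 ∧ γ ∈ L2 := by
  intro L
  induction L with
  | nil => intro h; have := h.length_le; simp at this
  | cons o L' ih =>
    intro h
    cases h with
    | cons _ h' =>
      obtain ⟨L1, L2, hEq, hα, hγ⟩ := ih h'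
      exact ⟨o :: L1, L2, by rw [hEq]; rfl, List.mem_cons_of_mem o hα, hγ⟩
    | cons_cons _ h' =>
      obtain ⟨P1, P2, hEq, hγ⟩ := sub2_split h'
      exact ⟨α :: P1, P2, by rw [hEq]; rfl, (List.mem_cons_self), hγ⟩

lemma L0 (O : List ℕ) (n : ℕ) (h : Has231 O) : westSort O ≠ idPerm n := by
  obtain ⟨α, β, γ, hsub, hγα, hαβ⟩ := h
  obtain ⟨O1, O2, hO, hα, hγ⟩ := sub3_split hsub
  intro heq
  unfold westSort sT at heq
  rw [hO] at heq
  obtain ⟨st₁, out₁, hEq, hPerm⟩ := runLem WW O1 [] []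
  rw [show O1 ++ β :: O2 = O1 ++ (β :: O2) from rfl, hEq (β :: O2), stkAux_cons] at heq
  set q := popPhase WW β st₁ with hq
  -- α is in the output out₁ ++ q.2
  have hα2 : α ∈ out₁ ++ q.2 := by
    have h1 : α ∈ out₁ ++ st₁ := (hPerm.mem_iff).mpr (by simpa using hα)
    rcases List.mem_append.mp h1 with h | h
    · exact List.mem_append_left _ h
    · -- α ∈ st₁ = q.2 ++ q.1
      rw [← pp_append WW β st₁] at h
      rcases List.mem_append.mp h with h2 | h2
      · exact List.mem_append_right _ h2
      · -- α ∈ q.1 : contradiction with no-inversion stack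
        exact absurd hαβ (by
          have := pp_end2 β st₁ β α (List.Sublist.cons₂ β (List.singleton_sublist.mpr h2))
          omega)
  obtain ⟨w, hw, _⟩ := stk_decomp WW O2 (β :: q.1) (out₁ ++ q.2)
  rw [hw] at heq
  -- γ ∈ w
  have hγw : γ ∈ w := by
    have hperm2 := stk_perm WW O2 (β :: q.1) (out₁ ++ q.2)
    rw [hw] at hperm2
    have hperm3 : w.Perm ((β :: q.1) ++ O2) := by
      rw [← List.perm_append_left_iff (out₁ ++ q.2)]
      refine hperm2.trans ?_
      rw [List.append_assoc]
    exact (hperm3.mem_iff).mpr (List.mem_append_right _ hγ)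
  have hsubfin : [α, γ].Sublist ((out₁ ++ q.2) ++ w) :=
    (List.singleton_sublist.mpr hα2).append (List.singleton_sublist.mpr hγw)
  rw [heq] at hsubfin
  have hpl : List.Pairwise (· < ·) (idPerm n) := List.pairwise_lt_range'
  have := List.Pairwise.sublist hsubfin hpl
  simp at this
  omega

/-- A `(132,321)`-sortable permutation avoids the bivincular pattern `132*`. -/
theorem sortable_avoids_132star (n : ℕ) (x : List ℕ) (hx : IsPermList n x)
    (hs : westSort (sT [[1,3,2],[3,2,1]] x) = idPerm n) :
    ¬ Has132Star x := by
  rintro ⟨i, j, hij, hj1, hlt, heqc⟩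
  have hi : i < x.length := by omega
  have hj : j < x.length := by omega
  -- names
  set a := x[i] with ha
  set b := x[j+1] with hb
  rw [List.getD_eq_getElem x 0 hi, List.getD_eq_getElem x 0 hj1] at hlt
  rw [List.getD_eq_getElem x 0 hj, List.getD_eq_getElem x 0 hj1] at heqc
  -- decomposition
  set pre := x.take i with hpre
  set mid := (x.drop (i+1)).take (j - (i+1)) with hmid
  set post := x.drop (j+2) with hpost
  have hd1 : x.drop i = a :: x.drop (i+1) := List.drop_eq_getElem_cons hi
  have hd2 : x.drop j = x[j] :: x.drop (j+1) := List.drop_eq_getElem_cons hj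
  have hd3 : x.drop (j+1) = b :: post := List.drop_eq_getElem_cons hj1
  have hmid2 : mid ++ x.drop j = x.drop (i+1) := by
    rw [hmid, show x.drop j = (x.drop (i+1)).drop (j - (i+1)) by
      rw [List.drop_drop]; congr 1; omega]
    exact List.take_append_drop _ _
  have hx2 : x = pre ++ a :: (mid ++ (b+1) :: b :: post) := by
    conv_lhs => rw [← List.take_append_drop i x]
    rw [hd1, ← hmid2, hd2, hd3, heqc]
  -- Nodup
  have hnd : x.Nodup := (hx.nodup_iff).mpr List.nodup_range'
  -- run the (132,321)-machine over pre
  obtain ⟨st₁, out₁, hEq, hPerm⟩ := runLem TT pre [] []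
  set q := popPhase TT a st₁ with hq
  have hstep : sT TT x = stkAux TT (mid ++ (b+1) :: b :: post) (a :: q.1) (out₁ ++ q.2) := by
    rw [sT, hx2, hEq, stkAux_cons]
  -- subperm facts
  have hst₁ : st₁.Subperm pre := by
    refine (List.sublist_append_right out₁ st₁).subperm.trans (List.Perm.subperm ?_)
    simpa using hPerm
  have hq1pre : q.1.Subperm pre := (pp_sf_sublist TT a st₁).subperm.trans hst₁
  -- Nodup of the reference list
  have hndN : (b :: (b+1) :: (mid ++ a :: pre)).Nodup := by
    have hsubX : (pre ++ a :: (mid ++ [b+1, b])).Sublist x := by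
      rw [hx2]
      refine (List.Sublist.refl pre).append (List.Sublist.cons₂ a ?_)
      refine (List.Sublist.refl mid).append ?_
      exact List.Sublist.cons₂ _ (List.Sublist.cons₂ _ (List.nil_sublist post))
    have hndX : (pre ++ a :: (mid ++ [b+1, b])).Nodup := hsubX.nodup hnd
    have hperm : (b :: (b+1) :: (mid ++ a :: pre)).Perm (pre ++ a :: (mid ++ [b+1, b])) := by
      calc b :: (b+1) :: (mid ++ a :: pre)
          ~ b :: (b+1) :: a :: (mid ++ pre) := by
            exact (List.perm_middle).cons (b+1) |>.cons b
        _ ~ b :: (b+1) :: a :: (pre ++ mid) := by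
            exact ((List.perm_append_comm).cons a).cons (b+1) |>.cons b
        _ ~ a :: (b+1) :: b :: (pre ++ mid) := by
            refine List.Perm.trans (List.Perm.swap (b+1) b _) ?_
            exact List.Perm.trans ((List.Perm.swap a b _).cons (b+1)) (List.Perm.swap a (b+1) _)
        _ ~ a :: ((pre ++ mid) ++ [b+1, b]) := by
            exact (List.perm_append_comm (l₁ := [b+1,b]) (l₂ := pre ++ mid)).cons a
        _ ~ pre ++ a :: (mid ++ [b+1, b]) := by
            refine List.Perm.trans ?_ (List.perm_middle.symm)
            rw [List.append_assoc]
    exact (hperm.nodup_iff).mpr hndX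
  have hndT : (b :: (b+1) :: (mid ++ (a :: q.1))).Nodup := by
    refine nodup_of_subperm ?_ hndN
    exact subperm_cons2 b (subperm_cons2 (b+1) (subperm_append_left' mid (subperm_cons2 a hq1pre)))
  have h231 : Has231 (sT TT x) := by
    rw [hstep]
    exact MAIN b post mid (a :: q.1) (out₁ ++ q.2) (pp_end3 a st₁)
      ⟨a, (List.mem_cons_self), hlt⟩ hndT
  exact L0 (sT TT x) n h231 hs
end

section
/- If x avoids both 132 and the bivincular pattern 123*, then the permutation obtained from x by deleting its maximum entry n also avoids 132 and 123*. -/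
lemma containsPat_sublist {p w w' : List ℕ} (hs : w'.Sublist w)
    (h : containsPat p w' = true) : containsPat p w = true := by
  simp only [containsPat, List.any_eq_true, List.mem_sublistsLen] at h ⊢
  obtain ⟨q, ⟨hq, hl⟩, hiso⟩ := h
  exact ⟨q, ⟨hq.trans hs, hl⟩, hiso⟩

lemma contains132 {a b c : ℕ} {w : List ℕ} (hs : List.Sublist [a,b,c] w)
    (h1 : a < c) (h2 : c < b) : containsPat [1,3,2] w = true := by
  simp only [containsPat, List.any_eq_true, List.mem_sublistsLen]
  refine ⟨[a,b,c], ⟨hs, rfl⟩, ?_⟩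
  simp [isoOrd, List.range_succ]
  omega


/-- Deleting the maximum entry preserves avoidance of `132` and `123*`. -/
theorem erase_max_avoids' (n : ℕ) (x : List ℕ) (hx : IsPermList n x)
    (h132 : containsPat [1,3,2] x = false) (hstar : ¬ Has123Star x) :
    containsPat [1,3,2] (x.erase n) = false ∧ ¬ Has123Star (x.erase n) := by
  by_cases hmem : n ∈ x
  · obtain ⟨u, v, hnu, hxe, her⟩ := List.exists_erase_eq hmem
    have hnd : x.Nodup := hx.nodup_iff.2 List.nodup_range'
    have hnv : n ∉ v := by
      rw [hxe] at hnd
      exact (List.nodup_cons.1 hnd.of_append_right).1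
    have hle : ∀ a ∈ x, a ≤ n := by
      intro a ha
      have := hx.mem_iff.1 ha
      rw [List.mem_range'_1] at this
      omega
    have hsub : (u ++ v).Sublist x := by
      rw [hxe]
      exact List.Sublist.append (List.Sublist.refl u) (List.sublist_cons_self n v)
    -- getD helper equalities
    have hxu : ∀ k, k < u.length → x.getD k 0 = u.getD k 0 := fun k hk => by
      rw [hxe]; exact List.getD_append _ _ _ _ hk
    have hxv : ∀ k, x.getD (u.length + 1 + k) 0 = v.getD k 0 := fun k => by
      rw [hxe, List.getD_append_right _ _ _ _ (by omega)]
      have h' : u.length + 1 + k - u.length = k + 1 := by omega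
      rw [h']; simp
    have hyu : ∀ k, k < u.length → (u ++ v).getD k 0 = u.getD k 0 := fun k hk =>
      List.getD_append _ _ _ _ hk
    have hyv : ∀ k, (u ++ v).getD (u.length + k) 0 = v.getD k 0 := fun k => by
      rw [List.getD_append_right _ _ _ _ (by omega)]
      congr 1
      omega
    rw [her]
    refine ⟨?_, ?_⟩
    · cases hcp : containsPat [1,3,2] (u ++ v) with
      | false => rfl
      | true => rw [containsPat_sublist hsub hcp] at h132; exact absurd h132 (by simp)
    · rintro ⟨i, j, hij, hlen, hlt, heq⟩
      rw [List.length_append] at hlen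
      have hxlen : x.length = u.length + v.length + 1 := by rw [hxe]; simp; omega
      by_cases hjL : j + 1 < u.length
      · apply hstar
        refine ⟨i, j, hij, by omega, ?_, ?_⟩
        · rw [hxu i (by omega), hxu j (by omega), ← hyu i (by omega), ← hyu j (by omega)]
          exact hlt
        · rw [hxu (j+1) (by omega), hxu j (by omega), ← hyu (j+1) (by omega),
            ← hyu j (by omega)]
          exact heq
      · by_cases hjL2 : j < u.length
        · -- j + 1 = u.length
          have hj1 : j + 1 = u.length := by omega
          have hvne : 0 < v.length := by omega
          have hac : u.getD i 0 < u.getD j 0 := by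
            rw [hyu i (by omega), hyu j (by omega)] at hlt; exact hlt
          have hcb : v.getD 0 0 = u.getD j 0 + 1 := by
            have e1 : (u ++ v).getD (j+1) 0 = v.getD 0 0 := by
              rw [hj1]
              have := hyv 0
              simpa using this
            rw [e1, hyu j (by omega)] at heq
            exact heq
          have hcv : v.getD 0 0 ∈ v := by
            rw [List.getD_eq_getElem _ _ hvne]
            exact List.getElem_mem hvne
          have hcn : v.getD 0 0 < n := by
            have h1 : v.getD 0 0 ≤ n := hle _ (by rw [hxe]; exact List.mem_append_right _ (List.mem_cons_of_mem _ hcv))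
            have h2 : v.getD 0 0 ≠ n := fun h => hnv (h ▸ hcv)
            omega
          have hs : List.Sublist [u.getD i 0, n, v.getD 0 0] x := by
            rw [hxe]
            show List.Sublist ([u.getD i 0] ++ n :: [v.getD 0 0]) (u ++ n :: v)
            refine List.Sublist.append ?_ (List.Sublist.cons₂ _ ?_)
            · rw [List.getD_eq_getElem _ _ (by omega)]
              exact List.singleton_sublist.2 (List.getElem_mem _)
            · rw [List.getD_eq_getElem _ _ hvne]
              exact List.singleton_sublist.2 (List.getElem_mem _)
          have := contains132 hs (by omega) hcn
          rw [this] at h132; exact absurd h132 (by simp)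
        · -- j ≥ u.length
          apply hstar
          have hxj1 : x.getD (j+1) 0 = (u ++ v).getD j 0 := by
            have e1 := hxv (j - u.length)
            have e2 := hyv (j - u.length)
            have h1 : u.length + 1 + (j - u.length) = j + 1 := by omega
            have h2 : u.length + (j - u.length) = j := by omega
            rw [h1] at e1; rw [h2] at e2; rw [e1, e2]
          have hxj2 : x.getD (j+2) 0 = (u ++ v).getD (j+1) 0 := by
            have e1 := hxv (j + 1 - u.length)
            have e2 := hyv (j + 1 - u.length)
            have h1 : u.length + 1 + (j + 1 - u.length) = j + 2 := by omega
            have h2 : u.length + (j + 1 - u.length) = j + 1 := by omega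
            rw [h1] at e1; rw [h2] at e2; rw [e1, e2]
          by_cases hiL : i < u.length
          · refine ⟨i, j + 1, by omega, by omega, ?_, ?_⟩
            · rw [hxu i hiL, hxj1, ← hyu i hiL]; exact hlt
            · rw [hxj1, hxj2]; exact heq
          · refine ⟨i + 1, j + 1, by omega, by omega, ?_, ?_⟩
            · have e1 := hxv (i - u.length)
              have e2 := hyv (i - u.length)
              have h1 : u.length + 1 + (i - u.length) = i + 1 := by omega
              have h2 : u.length + (i - u.length) = i := by omega
              rw [h1] at e1; rw [h2] at e2
              rw [e1, ← e2, hxj1]; exact hlt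
            · rw [hxj1, hxj2]; exact heq
  · rw [List.erase_of_not_mem hmem]
    exact ⟨h132, hstar⟩
end

section
/- Let x ∈ S_n avoid 123 and not be the decreasing permutation. Then the number of active sites of x with respect to 123 equals the index of the maximum entry among entries x_i with x_i + i ≠ n+1; more precisely, x_{a} = max{x_i : x_i + i ≠ n+1} where a is the number of sites j for which inserting n+1 immediately before position j (or at the end) yields a 123-avoiding permutation. -/
open List

lemma insertIdx_eq_tcd : ∀ (t : ℕ) (x : List ℕ) (a : ℕ), t ≤ x.length →
    x.insertIdx t a = x.take t ++ a :: x.drop t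
  | 0, x, a, _ => rfl
  | t+1, [], a, h => by simp at h
  | t+1, b :: x, a, h => by
    simp [List.insertIdx_succ_cons, insertIdx_eq_tcd t x a (by simpa using h)]

lemma isoOrd123 (a b c : ℕ) : isoOrd [1,2,3] [a,b,c] = true ↔ a < b ∧ b < c := by
  simp [isoOrd, List.range_succ]
  omega

lemma contains123_iff (w : List ℕ) :
    containsPat [1,2,3] w = true ↔ ∃ a b c, [a,b,c] <+ w ∧ a < b ∧ b < c := by
  rw [containsPat, List.any_eq_true]
  constructor
  · rintro ⟨l, hl, hiso⟩
    rw [List.mem_sublistsLen] at hl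
    obtain ⟨hsub, hlen⟩ := hl
    match l, hlen with
    | [a,b,c], _ =>
      exact ⟨a, b, c, hsub, (isoOrd123 a b c).1 hiso⟩
  · rintro ⟨a, b, c, hsub, h1, h2⟩
    exact ⟨[a,b,c], List.mem_sublistsLen.2 ⟨hsub, rfl⟩, (isoOrd123 a b c).2 ⟨h1, h2⟩⟩

lemma le_foldr_max {a : ℕ} : ∀ {l : List ℕ}, a ∈ l → a ≤ l.foldr max 0
  | b :: l, h => by
    rcases List.mem_cons.1 h with rfl | h
    · exact le_max_left _ _
    · exact le_trans (le_foldr_max h) (le_max_right _ _)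

lemma foldr_max_le {a : ℕ} : ∀ {l : List ℕ}, (∀ b ∈ l, b ≤ a) → l.foldr max 0 ≤ a
  | [], _ => Nat.zero_le a
  | b :: l, h => by
    simp only [List.foldr_cons, max_le_iff]
    exact ⟨h b (List.mem_cons_self), foldr_max_le fun c hc => h c (List.mem_cons_of_mem _ hc)⟩

lemma filter_range_le : ∀ (N K : ℕ), K < N →
    (((List.range N).filter fun t => decide (t ≤ K)).length = K + 1) := by
  intro N
  induction N with
  | zero => exact fun K h => absurd h (Nat.not_lt_zero K)
  | succ N ih =>
    intro K h
    rw [List.range_succ, List.filter_append]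
    rcases Nat.lt_or_ge K N with h' | h'
    · simp [ih K h', Nat.not_le.2 h']
    · have hKN : N = K := by omega
      subst hKN
      have h2 : (List.range N).filter (fun t => decide (t ≤ N)) = List.range N :=
        List.filter_eq_self.2 fun a ha => by
          have := List.mem_range.1 ha; simp; omega
      simp [h2]

lemma pair_sublist : ∀ (l : List ℕ) (i j : ℕ) (hij : i < j) (hj : j < l.length),
    [l[i]'(by omega), l[j]'hj] <+ l
  | a :: l, 0, j+1, hij, hj => by
    simpa using List.Sublist.cons₂ a (List.singleton_sublist.2 (l.getElem_mem _))
  | a :: l, i+1, j+1, hij, hj =>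
    List.Sublist.cons a (pair_sublist l i j (by omega) (by simpa using hj))

lemma triple_sublist : ∀ (l : List ℕ) (i j k : ℕ) (hij : i < j) (hjk : j < k)
    (hk : k < l.length),
    [l[i]'(by omega), l[j]'(by omega), l[k]'hk] <+ l
  | a :: l, 0, j+1, k+1, hij, hjk, hk => by
    simpa using List.Sublist.cons₂ a (pair_sublist l j k (by omega) (by simpa using hk))
  | a :: l, i+1, j+1, k+1, hij, hjk, hk =>
    List.Sublist.cons a (triple_sublist l i j k (by omega) (by omega) (by simpa using hk))

/-- For `x ∈ Av_n(123)` not equal to the decreasing permutation, the entry of `x`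
at the position (1-based) given by the number of active sites of `x` with respect to `123`
equals `max { x_i : x_i + i ≠ n + 1 }` (`i` 1-based). -/
theorem signature_char (n : ℕ) (x : List ℕ) (hx : IsPermList n x)
    (h123 : containsPat [1,2,3] x = false)
    (hdec : x ≠ (List.range' 1 n).reverse) :
    x.getD
      ((((List.range' 1 (n+1)).filter fun j =>
          !containsPat [1,2,3] (x.insertIdx (j-1) (n+1))).length) - 1) 0 =
    (((List.range' 1 n).filter fun i => x.getD (i-1) 0 + i != n + 1).map
        fun i => x.getD (i-1) 0).foldr max 0 := by
  classical
  replace hx : x.Perm (List.range' 1 n) := hx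
  have hlen : x.length = n := by simpa using hx.length_eq
  have hnd : x.Nodup := hx.nodup_iff.2 (List.nodup_range' (s := 1) (n := n))
  haveI : IsTrans ℕ (· > ·) := ⟨fun a b c h1 h2 => lt_trans h2 h1⟩
  haveI : IsAntisymm ℕ (· > ·) := ⟨fun a b h1 h2 => absurd h1 (lt_asymm h2)⟩
  set f : ℕ → ℕ := fun p => x.getD p 0 with hfdef
  have hfd : ∀ (p : ℕ) (hp : p < x.length), x[p] = f p := fun p hp =>
    (List.getD_eq_getElem x 0 hp).symm
  have hmemx : ∀ v, v ∈ x ↔ 1 ≤ v ∧ v < 1 + n := fun v => by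
    rw [hx.mem_iff]; exact List.mem_range'_1
  have hvx : ∀ p, p < n → f p ∈ x := by
    intro p hp
    rw [← hfd p (by rw [hlen]; exact hp)]
    exact List.getElem_mem _
  have hub' : ∀ p, p < n → 1 ≤ f p ∧ f p ≤ n := by
    intro p hp
    have := (hmemx _).1 (hvx p hp); omega
  have hinj : ∀ p q, p < n → q < n → f p = f q → p = q := by
    intro p q hp hq hfq
    have hp' : p < x.length := by omega
    have hq' : q < x.length := by omega
    rw [← hfd p hp', ← hfd q hq'] at hfq
    exact (hnd.getElem_inj_iff).1 hfq
  have Hx3 : ∀ a b c : ℕ, [a,b,c] <+ x → a < b → b < c → False := by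
    intro a b c hsub h1 h2
    have : containsPat [1,2,3] x = true := (contains123_iff x).2 ⟨a,b,c,hsub,h1,h2⟩
    rw [h123] at this; exact Bool.false_ne_true this
  have H3 : ∀ i j k, i < j → j < k → k < n → f i < f j → f j < f k → False := by
    intro i j k hij hjk hk h1 h2
    have hk' : k < x.length := by omega
    have hs := triple_sublist x i j k hij hjk hk'
    simp only [hfd] at hs
    exact Hx3 _ _ _ hs h1 h2
  have hex : ∃ k, k + 1 < n ∧ f k < f (k+1) := by
    by_contra hcon
    push_neg at hcon
    apply hdec
    have hchain : x.Chain' (· > ·) := by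
      rw [List.Chain', List.isChain_iff_getElem]
      intro i hi
      have hi1 : i + 1 < n := by omega
      rw [hfd, hfd]
      have hne : f i ≠ f (i+1) := fun h => by
        have := hinj i (i+1) (by omega) hi1 h; omega
      have := hcon i hi1
      omega
    have hsx : x.Pairwise (· > ·) := List.isChain_iff_pairwise.1 hchain
    have hsr : ((List.range' 1 n).reverse).Pairwise (· > ·) := by
      rw [List.pairwise_reverse]
      exact List.pairwise_lt_range' (s := 1) (n := n)
    exact List.Perm.eq_of_sortedGE (hsx.imp le_of_lt).sortedGE (hsr.imp le_of_lt).sortedGE (hx.trans (List.reverse_perm _).symm)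
  set m := Nat.find hex with hmdef
  have hm := Nat.find_spec hex
  have hm1 : m + 1 < n := hm.1
  have hm2 : f m < f (m+1) := hm.2
  have hpre : ∀ i, i < m → f (i+1) < f i := by
    intro i him
    have hni := Nat.find_min hex him
    push_neg at hni
    have hi1 : i + 1 < n := by omega
    have h1 := hni hi1
    have hne : f i ≠ f (i+1) := fun h => by
      have := hinj i (i+1) (by omega) hi1 h; omega
    omega
  have hPW : ∀ t, t ≤ m + 1 → (x.take t).Pairwise (· > ·) := by
    intro t ht
    apply List.isChain_iff_pairwise.1
    rw [List.isChain_iff_getElem]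
    intro i hi
    have hlt : i + 1 < t := by
      simp only [List.length_take] at hi; omega
    simp only [List.get_eq_getElem, List.getElem_take, hfd]
    exact hpre i (by omega)
  have hA : ∀ t, t ≤ n → m + 2 ≤ t → containsPat [1,2,3] (x.insertIdx t (n+1)) = true := by
    intro t htn htm
    rw [insertIdx_eq_tcd t x (n+1) (by rw [hlen]; exact htn)]
    apply (contains123_iff _).2
    refine ⟨f m, f (m+1), n+1, ?_, hm2, by have := hub' (m+1) (by omega); omega⟩
    have hlt : m + 1 < (x.take t).length := by
      simp only [List.length_take]; omega
    have hp := pair_sublist (x.take t) m (m+1) (by omega) hlt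
    simp only [List.getElem_take, hfd] at hp
    have he : [f m, f (m+1), n+1] = [f m, f (m+1)] ++ [n+1] := rfl
    rw [he]
    exact hp.append (List.Sublist.cons₂ _ (List.nil_sublist _))
  have hB : ∀ t, t ≤ n → t ≤ m + 1 → containsPat [1,2,3] (x.insertIdx t (n+1)) = false := by
    intro t htn htm
    by_contra hc
    rw [Bool.not_eq_false] at hc
    rw [insertIdx_eq_tcd t x (n+1) (by rw [hlen]; exact htn)] at hc
    obtain ⟨a, b, c, hsub, hab, hbc⟩ := (contains123_iff _).1 hc
    have he : x.take t ++ (n+1) :: x.drop t = x.take t ++ ([n+1] ++ x.drop t) := rfl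
    rw [he, List.sublist_append_iff] at hsub
    obtain ⟨u, v, heq, hu, hv⟩ := hsub
    rw [List.sublist_append_iff] at hv
    obtain ⟨v1, v2, heqv, hv1, hv2⟩ := hv
    subst heqv
    have hxmem : ∀ w ∈ v2, w ≤ n := by
      intro w hw
      have hwx : w ∈ x := (List.Subset.trans hv2.subset (List.drop_subset _ _)) hw
      have := (hmemx w).1 hwx; omega
    rcases List.sublist_cons_iff.1 hv1 with h1 | ⟨r, hr, hrnil⟩
    · have hv1nil := List.sublist_nil.1 h1
      subst hv1nil
      simp only [List.nil_append] at heq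
      have hsx : [a,b,c] <+ x := by
        rw [heq, ← List.take_append_drop t x]
        exact hu.append hv2
      exact Hx3 a b c hsx hab hbc
    · have hrnil' := List.sublist_nil.1 hrnil
      subst hrnil'
      subst hr
      rcases u with _ | ⟨u1, _ | ⟨u2, _ | ⟨u3, u'⟩⟩⟩
      · simp only [List.nil_append, List.singleton_append] at heq
        injection heq with ha htail
        have hb := hxmem b (by rw [← htail]; simp)
        omega
      · simp only [List.cons_append, List.singleton_append, List.nil_append] at heq
        injection heq with ha htail
        injection htail with hb htail2
        have hc' := hxmem c (by rw [← htail2]; simp)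
        omega
      · simp only [List.cons_append, List.singleton_append, List.nil_append] at heq
        injection heq with ha htail
        injection htail with hb htail2
        injection htail2 with hc2 hnil
        subst ha; subst hb
        have := List.pairwise_iff_forall_sublist.1 (hPW t htm) hu
        omega
      · have := congrArg List.length heq
        simp at this
  have hfiltlen : (((List.range' 1 (n+1)).filter fun j =>
      !containsPat [1,2,3] (x.insertIdx (j-1) (n+1))).length) = m + 2 := by
    have hcg : ((List.range' 1 (n+1)).filter fun j =>
        !containsPat [1,2,3] (x.insertIdx (j-1) (n+1))) =
        ((List.range' 1 (n+1)).filter fun j => decide (j - 1 ≤ m + 1)) := by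
      apply List.filter_congr
      intro j hj
      have hj' := List.mem_range'_1.1 hj
      have htn : j - 1 ≤ n := by omega
      rcases le_or_gt (j-1) (m+1) with h | h
      · rw [hB (j-1) htn h]; simp [h]
      · rw [hA (j-1) htn (by omega)]; simp; omega
    rw [hcg, List.range'_eq_map_range, ← List.countP_eq_length_filter, List.countP_map]
    have hfe : ((fun j => decide (j - 1 ≤ m + 1)) ∘ (1 + ·)) = fun t => decide (t ≤ m + 1) := by
      funext t
      simp only [Function.comp_apply]
      exact decide_eq_decide.2 (by omega)
    rw [hfe, List.countP_eq_length_filter]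
    exact filter_range_le (n+1) (m+1) (by omega)
  have hcount : ∀ v, v ≤ n → (x.filter fun w => decide (v < w)).length = n - v := by
    intro v hv
    rw [(hx.filter _).length_eq]
    have hsplit : List.range' 1 v ++ List.range' (1+v) (n-v) = List.range' 1 n := by
      rw [List.range'_append_1]; congr 1; omega
    rw [← hsplit, List.filter_append]
    have h1 : (List.range' 1 v).filter (fun w => decide (v < w)) = [] := by
      simp only [List.filter_eq_nil_iff]
      intro w hw
      have := List.mem_range'_1.1 hw
      simp; omega
    have h2 : (List.range' (1+v) (n-v)).filter (fun w => decide (v < w)) =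
        List.range' (1+v) (n-v) := by
      apply List.filter_eq_self.2
      intro w hw
      have := List.mem_range'_1.1 hw
      simp; omega
    rw [h1, h2]
    simp
  have hKC : ∀ v t0, (∀ q, t0 ≤ q → q < n → f q ≤ v) →
      (x.filter fun w => decide (v < w)).length ≤ t0 := by
    intro v t0 hq
    have hnil : (x.drop t0).filter (fun w => decide (v < w)) = [] := by
      simp only [List.filter_eq_nil_iff]
      intro w hw
      obtain ⟨q, hqlt, hwq⟩ := List.mem_iff_getElem.1 hw
      subst hwq
      simp only [List.getElem_drop, hfd]
      have hbd : t0 + q < n := by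
        simp only [List.length_drop] at hqlt; omega
      have := hq (t0+q) (by omega) hbd
      simp; omega
    calc (x.filter fun w => decide (v < w)).length
        = ((x.take t0 ++ x.drop t0).filter fun w => decide (v < w)).length := by
          rw [List.take_append_drop]
      _ ≤ t0 := by
          rw [List.filter_append, hnil]
          simp only [List.append_nil]
          calc ((x.take t0).filter fun w => decide (v < w)).length
              ≤ (x.take t0).length := List.length_filter_le _ _
            _ ≤ t0 := by simp [List.length_take]
  have hKD : ∀ v t0, t0 ≤ n → (∀ q, q < t0 → v < f q) →
      t0 ≤ (x.filter fun w => decide (v < w)).length := by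
    intro v t0 ht0 hq
    have hall : (x.take t0).filter (fun w => decide (v < w)) = x.take t0 := by
      apply List.filter_eq_self.2
      intro w hw
      obtain ⟨q, hqlt, hwq⟩ := List.mem_iff_getElem.1 hw
      subst hwq
      simp only [List.getElem_take, hfd]
      have hqt : q < t0 := by
        simp only [List.length_take] at hqlt; omega
      simp
      exact hq q hqt
    calc t0 = (x.take t0).length := by simp [List.length_take]; omega
      _ = ((x.take t0).filter fun w => decide (v < w)).length := by rw [hall]
      _ ≤ (x.filter fun w => decide (v < w)).length :=
          ((List.take_sublist t0 x).filter _).length_le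
  have hub : ∀ q, m ≤ q → q < n → f q ≤ f (m+1) := by
    intro q hq1 hq2
    rcases Nat.lt_or_ge q (m+2) with h | h
    · have : q = m ∨ q = m + 1 := by omega
      rcases this with rfl | rfl
      · exact le_of_lt hm2
      · exact le_refl _
    · by_contra hcon
      push_neg at hcon
      exact H3 m (m+1) q (by omega) (by omega) hq2 hm2 hcon
  have hmono : ∀ p, p ≤ m → ∀ q, q < p → f p < f q := by
    intro p
    induction p with
    | zero => intro _ q hq; omega
    | succ p ih =>
      intro hp q hq
      have hstep : f (p+1) < f p := hpre p (by omega)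
      rcases Nat.lt_or_ge q p with h | h
      · exact lt_trans hstep (ih (by omega) q h)
      · have : q = p := by omega
        subst this; exact hstep
  have KB : f (m+1) + (m+2) ≠ n + 1 := by
    intro hcon
    have h1 := hKC (f (m+1)) m hub
    have h2 := hcount (f (m+1)) (hub' (m+1) (by omega)).2
    have h3 := hub' (m+1) (by omega)
    omega
  have KA : ∀ p, p < n → f p + (p+1) ≠ n + 1 → f p ≤ f (m+1) := by
    intro p hp hne
    by_contra hcon
    push_neg at hcon
    have hpm : p < m := by
      rcases Nat.lt_or_ge p m with h | h
      · exact h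
      · exfalso
        rcases Nat.lt_or_ge p (m+2) with h2 | h2
        · have : p = m ∨ p = m + 1 := by omega
          rcases this with rfl | rfl <;> omega
        · exact H3 m (m+1) p (by omega) (by omega) hp hm2 hcon
    have hupper : ∀ q, p ≤ q → q < n → f q ≤ f p := by
      intro q hq1 hq2
      rcases Nat.lt_or_ge q (m+1) with h | h
      · rcases Nat.eq_or_lt_of_le hq1 with rfl | h3
        · exact le_refl _
        · exact le_of_lt (hmono q (by omega) p h3)
      · exact le_trans (hub q (by omega) hq2) (le_of_lt hcon)
    have hupper' : ∀ q, p ≤ q → q < n → f q ≤ f p := hupper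
    have h1 : (x.filter fun w => decide (f p < w)).length ≤ p := by
      apply hKC
      intro q hq1 hq2
      exact hupper q hq1 hq2
    have h2 := hKD (f p) p (by omega) (fun q hq => hmono p (by omega) q hq)
    have h3 := hcount (f p) (hub' p hp).2
    have h4 := hub' p hp
    omega
  rw [hfiltlen]
  show f (m + 2 - 1) = _
  have hidx : m + 2 - 1 = m + 1 := rfl
  rw [hidx]
  refine le_antisymm (le_foldr_max ?_) (foldr_max_le ?_)
  · apply List.mem_map.2
    refine ⟨m + 2, List.mem_filter.2 ⟨List.mem_range'_1.2 (by omega), ?_⟩, rfl⟩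
    simp only [Nat.add_sub_cancel, bne_iff_ne, ne_eq]
    show ¬ (f (m + 2 - 1) + (m + 2) = n + 1)
    rw [hidx]
    exact KB
  · intro b hb
    obtain ⟨i, hi, rfl⟩ := List.mem_map.1 hb
    obtain ⟨hir, hiq⟩ := List.mem_filter.1 hi
    have hir' := List.mem_range'_1.1 hir
    have hp : i - 1 < n := by omega
    have hq : f (i-1) + ((i-1)+1) ≠ n + 1 := by
      simp only [bne_iff_ne, ne_eq] at hiq
      show ¬ (f (i-1) + ((i-1)+1) = n + 1)
      intro hcc
      apply hiq
      show f (i-1) + i = n + 1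
      omega
    exact KA (i-1) hp hq
end
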